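/- Let n ≥ 1, C₀ > 0, k ≥ 1, and set q = C₀·(2^n - 1). Suppose C and Q ≥ 0 satisfy C - k·q < C₀, C - Q > 0, and Q ≤ (k-1)·q. Then (C - k·q)/(C - Q) ≤ (C - k·q)/(C - k·q + C₀·(2^n - 1)) < 1/2^n. -/
import Mathlib


open Real

theorem stmt_4 (n k : ℕ) (hn : 1 ≤ n) (hk : 1 ≤ k) (C₀ : ℝ) (hC₀ : 0 < C₀)
    (q : ℝ) (hq : q = C₀ * (2 ^ n - 1))
    (C Q : ℝ) (hQ0 : 0 ≤ Q)
    (hCk : 0 < C - k * q) (hCk' : C - k * q < C₀)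
    (hCQ : 0 < C - Q) (hQ : Q ≤ ((k : ℝ) - 1) * q) :
    (C - k * q) / (C - Q) ≤ (C - k * q) / (C - k * q + C₀ * (2 ^ n - 1)) ∧
    (C - k * q) / (C - k * q + C₀ * (2 ^ n - 1)) < 1 / 2 ^ n := by
  have h2n : (1 : ℝ) < 2 ^ n := by
    have : (2 : ℝ) ^ 1 ≤ 2 ^ n := pow_le_pow_right₀ (by norm_num) hn
    linarith
  have hden : 0 < C - k * q + C₀ * (2 ^ n - 1) := by
    have : 0 < C₀ * (2 ^ n - 1) := mul_pos hC₀ (by linarith)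
    linarith
  constructor
  · apply div_le_div_of_nonneg_left hCk.le hden
    nlinarith [hQ, hq]
  · rw [div_lt_div_iff₀ hden (by positivity)]
    nlinarith [mul_pos hCk (show (0:ℝ) < 2 ^ n - 1 by linarith)]
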